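/- arXiv:1709.10002 — 7 statements merged into one kernel-verified Lean document; each statement's English description precedes it below -/
import Mathlib

section
/- Let μ, α₁, α₂, β, a be real numbers with α₁ ≠ α₂, and let k₁, k₂ be non-negative integers with k₁ + k₂ = n − 1 and n ≥ 3. Define the quadratic form f(x₁,…,xₙ) = μx₁² + α₁·∑_{i=2}^{k₁+1} xᵢ² + α₂·∑_{i=k₁+2}^{n} xᵢ² + 2a·∑_{i=2}^{n} x₁xᵢ + 2β·∑_{2≤i<j≤n} xᵢxⱼ. If (A1) α₁ ≥ β and α₂ ≥ β; (A2) α₁ + α₂ + (n−3)β + μ ≥ 0; (A3) (μ + α₁ − β)[α₂ + (k₂−1)β] + (α₁ − β)μ + k₁β(α₂ − β + μ) − (n−1)a² ≥ 0; (A4) (α₁ − β)[α₂ + (k₂−1)β]μ + k₁(α₂ − β)βμ − a²[k₁(α₂ − β) + k₂(α₁ − β)] ≥ 0; (A5) μ + k₁α₁ + k₂α₂ > 0; and (A6) (α₁ − β)(α₂ − β)·{(α₁ − β)[α₂ + (k₂−1)β]μ + k₁(α₂ − β)βμ − a²[k₁(α₂ − β) + k₂(α₁ − β)]} = 0, then f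 is positive semidefinite, i.e., f(x₁,…,xₙ) ≥ 0 for all real x₁,…,xₙ. -/
open Finset

/-- The quadratic form
`f(x₁,…,xₙ) = μx₁² + α₁·∑_{i=2}^{k₁+1} xᵢ² + α₂·∑_{i=k₁+2}^{n} xᵢ²
  + 2a·∑_{i=2}^{n} x₁xᵢ + 2β·∑_{2≤i<j≤n} xᵢxⱼ`. -/
def quadFormF (n k₁ : ℕ) (μ α₁ α₂ β a : ℝ) (x : ℕ → ℝ) : ℝ :=
    μ * x 1 ^ 2 + α₁ * ∑ i ∈ Icc 2 (k₁ + 1), x i ^ 2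
    + α₂ * ∑ i ∈ Icc (k₁ + 2) n, x i ^ 2
    + 2 * a * ∑ i ∈ Icc 2 n, x 1 * x i
    + 2 * β * ∑ i ∈ Icc 2 n, ∑ j ∈ Icc (i + 1) n, x i * x j

/-- A real symmetric 3×3 matrix whose characteristic polynomial has nonnegative
(alternating) coefficients is positive semidefinite. -/
lemma key3 (p q r u v w : ℝ)
    (h1 : 0 ≤ p + q + r)
    (h2 : 0 ≤ p*q - u^2 + p*r - v^2 + q*r - w^2)
    (h3 : 0 ≤ p*q*r + 2*u*v*w - p*w^2 - q*v^2 - r*u^2) :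
    ∀ x y z : ℝ, 0 ≤ p*x^2 + q*y^2 + r*z^2 + 2*u*x*y + 2*v*x*z + 2*w*y*z := by
  set M : Matrix (Fin 3) (Fin 3) ℝ := !![p,u,v;u,q,w;v,w,r] with hMdef
  have hM : M.IsHermitian := by
    unfold Matrix.IsHermitian
    ext i j
    fin_cases i <;> fin_cases j <;> simp [hMdef]
  have heig : ∀ i, 0 ≤ hM.eigenvalues i := by
    intro i
    by_contra hlt
    push_neg at hlt
    have hspec := hM.eigenvalues_mem_spectrum_real i
    set t := hM.eigenvalues i with ht
    rw [spectrum.mem_iff] at hspec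
    have hdet : (algebraMap ℝ (Matrix (Fin 3) (Fin 3) ℝ) t - M).det = 0 := by
      by_contra h
      exact hspec ((Matrix.isUnit_iff_isUnit_det _).2 (Ne.isUnit h))
    have hmat : algebraMap ℝ (Matrix (Fin 3) (Fin 3) ℝ) t - M
        = !![t-p,-u,-v;-u,t-q,-w;-v,-w,t-r] := by
      ext i j
      fin_cases i <;> fin_cases j <;>
        simp [Matrix.algebraMap_matrix_apply, hMdef]
    rw [hmat, Matrix.det_fin_three] at hdet
    norm_num [Matrix.cons_val_zero, Matrix.cons_val_one, Matrix.cons_val_two, Matrix.vecHead, Matrix.vecTail, Matrix.head_cons] at hdet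
    nlinarith [sq_nonneg t, mul_nonneg h1 (sq_nonneg t), mul_nonneg h2 (le_of_lt (neg_pos.2 hlt)),
      mul_pos (mul_pos (neg_pos.2 hlt) (neg_pos.2 hlt)) (neg_pos.2 hlt)]
  have hPSD := hM.posSemidef_iff_eigenvalues_nonneg.2 heig
  intro x y z
  have h := hPSD.dotProduct_mulVec_nonneg ![x, y, z]
  simp [dotProduct, Matrix.mulVec, Fin.sum_univ_three, hMdef] at h
  nlinarith [h]

lemma sum_Icc_split (f : ℕ → ℝ) (n k₁ : ℕ) (h : k₁ + 1 ≤ n) :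
    ∑ i ∈ Icc 2 n, f i = ∑ i ∈ Icc 2 (k₁ + 1), f i + ∑ i ∈ Icc (k₁ + 2) n, f i := by
  rw [← Finset.Ico_add_one_right_eq_Icc, ← Finset.Ico_add_one_right_eq_Icc, ← Finset.Ico_add_one_right_eq_Icc]
  exact (Finset.sum_Ico_consecutive f (by omega) (by omega)).symm

lemma sq_sum_expand (x : ℕ → ℝ) :
    ∀ n, (∑ i ∈ Icc 2 n, x i) ^ 2
      = ∑ i ∈ Icc 2 n, x i ^ 2 + 2 * ∑ i ∈ Icc 2 n, ∑ j ∈ Icc (i + 1) n, x i * x j := by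
  intro n
  induction n with
  | zero => simp
  | succ m ih =>
    rcases Nat.lt_or_ge m 1 with hm | hm
    · interval_cases m <;> simp
    · have h2m : 2 ≤ m + 1 := by omega
      rw [Finset.sum_Icc_succ_top h2m, Finset.sum_Icc_succ_top h2m (fun i => x i ^ 2),
        Finset.sum_Icc_succ_top h2m (fun i => ∑ j ∈ Icc (i + 1) (m + 1), x i * x j)]
      have hempty : Icc (m + 1 + 1) (m + 1) = (∅ : Finset ℕ) := Finset.Icc_eq_empty (by omega)
      have hinner : ∑ i ∈ Icc 2 m, ∑ j ∈ Icc (i + 1) (m + 1), x i * x j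
          = ∑ i ∈ Icc 2 m, ∑ j ∈ Icc (i + 1) m, x i * x j
            + (∑ i ∈ Icc 2 m, x i) * x (m + 1) := by
        rw [Finset.sum_mul, ← Finset.sum_add_distrib]
        refine Finset.sum_congr rfl fun i hi => ?_
        have : i + 1 ≤ m + 1 := by
          have := (Finset.mem_Icc.1 hi).2; omega
        rw [Finset.sum_Icc_succ_top this]
      rw [hempty, hinner]
      simp only [Finset.sum_empty, add_zero]
      nlinarith [ih]

theorem quadFormF_nonneg (n k₁ k₂ : ℕ) (μ α₁ α₂ β a : ℝ)
    (hn : 3 ≤ n) (hk : k₁ + k₂ = n - 1) (hα : α₁ ≠ α₂)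
    (hA1 : α₁ ≥ β ∧ α₂ ≥ β)
    (hA2 : α₁ + α₂ + ((n : ℝ) - 3) * β + μ ≥ 0)
    (hA3 : (μ + α₁ - β) * (α₂ + ((k₂ : ℝ) - 1) * β) + (α₁ - β) * μ
      + (k₁ : ℝ) * β * (α₂ - β + μ) - ((n : ℝ) - 1) * a ^ 2 ≥ 0)
    (hA4 : (α₁ - β) * (α₂ + ((k₂ : ℝ) - 1) * β) * μ + (k₁ : ℝ) * (α₂ - β) * β * μ
      - a ^ 2 * ((k₁ : ℝ) * (α₂ - β) + (k₂ : ℝ) * (α₁ - β)) ≥ 0)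
    (hA5 : μ + (k₁ : ℝ) * α₁ + (k₂ : ℝ) * α₂ > 0)
    (hA6 : (α₁ - β) * (α₂ - β) *
      ((α₁ - β) * (α₂ + ((k₂ : ℝ) - 1) * β) * μ + (k₁ : ℝ) * (α₂ - β) * β * μ
        - a ^ 2 * ((k₁ : ℝ) * (α₂ - β) + (k₂ : ℝ) * (α₁ - β))) = 0) :
    ∀ x : ℕ → ℝ, quadFormF n k₁ μ α₁ α₂ β a x ≥ 0 := by
  intro x
  have hk1n : k₁ + 1 ≤ n := by omega
  have hkr : (k₁ : ℝ) + (k₂ : ℝ) = (n : ℝ) - 1 := by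
    have h := congrArg (fun m : ℕ => (m : ℝ)) hk
    push_cast [Nat.cast_sub (by omega : 1 ≤ n)] at h
    linarith
  set t := x 1 with htdef
  set s1 := ∑ i ∈ Icc 2 (k₁ + 1), x i with hs1def
  set s2 := ∑ i ∈ Icc (k₁ + 2) n, x i with hs2def
  set Q1 := ∑ i ∈ Icc 2 (k₁ + 1), x i ^ 2 with hQ1def
  set Q2 := ∑ i ∈ Icc (k₁ + 2) n, x i ^ 2 with hQ2def
  set S := ∑ i ∈ Icc 2 n, x i with hSdef
  set T := ∑ i ∈ Icc 2 n, ∑ j ∈ Icc (i + 1) n, x i * x j with hTdef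
  have hS : S = s1 + s2 := sum_Icc_split x n k₁ hk1n
  have hQsplit : ∑ i ∈ Icc 2 n, x i ^ 2 = Q1 + Q2 := sum_Icc_split (fun i => x i ^ 2) n k₁ hk1n
  have hsq : S ^ 2 = Q1 + Q2 + 2 * T := by
    rw [hSdef, hTdef, sq_sum_expand x n, hQsplit]
  have hlin : ∑ i ∈ Icc 2 n, x 1 * x i = t * S := by
    rw [hSdef, Finset.mul_sum]
  have hQ1nonneg : 0 ≤ Q1 := Finset.sum_nonneg fun i _ => sq_nonneg _
  have hQ2nonneg : 0 ≤ Q2 := Finset.sum_nonneg fun i _ => sq_nonneg _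
  have hcard1 : (Icc 2 (k₁ + 1)).card = k₁ := by rw [Nat.card_Icc]; omega
  have hcard2 : (Icc (k₁ + 2) n).card = k₂ := by rw [Nat.card_Icc]; omega
  have hCS1 : s1 ^ 2 ≤ (k₁ : ℝ) * Q1 := by
    have h := sq_sum_le_card_mul_sum_sq (s := Icc 2 (k₁ + 1)) (f := x)
    rwa [hcard1] at h
  have hCS2 : s2 ^ 2 ≤ (k₂ : ℝ) * Q2 := by
    have h := sq_sum_le_card_mul_sum_sq (s := Icc (k₁ + 2) n) (f := x)
    rwa [hcard2] at h
  have hf : quadFormF n k₁ μ α₁ α₂ β a x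
      = μ * t ^ 2 + 2 * a * t * S + β * S ^ 2 + (α₁ - β) * Q1 + (α₂ - β) * Q2 := by
    unfold quadFormF
    rw [← hQ1def, ← hQ2def, ← hTdef, hlin]
    linear_combination (-β) * hsq
  -- square roots of the cardinalities
  set r1 := Real.sqrt k₁ with hr1def
  set r2 := Real.sqrt k₂ with hr2def
  have hr1sq : r1 ^ 2 = (k₁ : ℝ) := Real.sq_sqrt (by positivity)
  have hr2sq : r2 ^ 2 = (k₂ : ℝ) := Real.sq_sqrt (by positivity)
  set q := (α₁ - β) + (k₁ : ℝ) * β with hqdef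
  set r := (α₂ - β) + (k₂ : ℝ) * β with hrdef
  have key := key3 μ q r (a * r1) (a * r2) (β * r1 * r2) ?_ ?_ ?_
  · -- choose the second coordinate
    obtain ⟨Y, hrY, hkY, hYQ⟩ : ∃ Y : ℝ, r1 * Y = s1 ∧ (k₁ : ℝ) * Y ^ 2 = s1 ^ 2 ∧ Y ^ 2 ≤ Q1 := by
      rcases Nat.eq_zero_or_pos k₁ with hk0 | hkpos
      · have hs10 : s1 = 0 := by
          rw [hs1def, hk0]
          simp
        exact ⟨0, by simp [hs10], by simp [hs10], by simpa using hQ1nonneg⟩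
      · have hk1pos : (0 : ℝ) < (k₁ : ℝ) := by exact_mod_cast hkpos
        have hr1pos : 0 < r1 := Real.sqrt_pos.2 hk1pos
        refine ⟨s1 / r1, mul_div_cancel₀ _ (ne_of_gt hr1pos), ?_, ?_⟩
        · rw [div_pow, hr1sq]
          field_simp
        · rw [div_pow, hr1sq, div_le_iff₀ hk1pos]
          linarith [hCS1]
    obtain ⟨Z, hrZ, hkZ, hZQ⟩ : ∃ Z : ℝ, r2 * Z = s2 ∧ (k₂ : ℝ) * Z ^ 2 = s2 ^ 2 ∧ Z ^ 2 ≤ Q2 := by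
      rcases Nat.eq_zero_or_pos k₂ with hk0 | hkpos
      · have hs20 : s2 = 0 := by
          rw [hs2def]
          rw [Finset.Icc_eq_empty (by omega)]
          simp
        exact ⟨0, by simp [hs20], by simp [hs20], by simpa using hQ2nonneg⟩
      · have hk2pos : (0 : ℝ) < (k₂ : ℝ) := by exact_mod_cast hkpos
        have hr2pos : 0 < r2 := Real.sqrt_pos.2 hk2pos
        refine ⟨s2 / r2, mul_div_cancel₀ _ (ne_of_gt hr2pos), ?_, ?_⟩
        · rw [div_pow, hr2sq]
          field_simp
        · rw [div_pow, hr2sq, div_le_iff₀ hk2pos]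
          linarith [hCS2]
    have H := key t Y Z
    have hval : μ * t ^ 2 + q * Y ^ 2 + r * Z ^ 2 + 2 * (a * r1) * t * Y
        + 2 * (a * r2) * t * Z + 2 * (β * r1 * r2) * Y * Z
        = μ * t ^ 2 + 2 * a * t * (s1 + s2) + β * (s1 + s2) ^ 2
          + (α₁ - β) * Y ^ 2 + (α₂ - β) * Z ^ 2 := by
      rw [hqdef, hrdef]
      linear_combination β * hkY + β * hkZ + 2 * a * t * hrY + 2 * a * t * hrZ
        + 2 * β * (r2 * Z) * hrY + 2 * β * s1 * hrZ
    have hc1 : (α₁ - β) * Y ^ 2 ≤ (α₁ - β) * Q1 :=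
      mul_le_mul_of_nonneg_left hYQ (by linarith [hA1.1])
    have hc2 : (α₂ - β) * Z ^ 2 ≤ (α₂ - β) * Q2 :=
      mul_le_mul_of_nonneg_left hZQ (by linarith [hA1.2])
    rw [ge_iff_le, hf, hS]
    linarith [H, hval, hc1, hc2]
  · -- trace condition
    rw [hqdef, hrdef]
    calc (0:ℝ) ≤ α₁ + α₂ + ((n : ℝ) - 3) * β + μ := hA2
      _ = μ + (α₁ - β + (k₁:ℝ) * β) + (α₂ - β + (k₂:ℝ) * β) := by linear_combination (-β) * hkr
  · -- second coefficient
    have e1 : (a * r1) ^ 2 = a ^ 2 * (k₁ : ℝ) := by rw [mul_pow, hr1sq]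
    have e2 : (a * r2) ^ 2 = a ^ 2 * (k₂ : ℝ) := by rw [mul_pow, hr2sq]
    have e3 : (β * r1 * r2) ^ 2 = β ^ 2 * (k₁ : ℝ) * (k₂ : ℝ) := by
      rw [mul_pow, mul_pow, hr1sq, hr2sq]
    rw [e1, e2, e3, hqdef, hrdef]
    calc (0:ℝ) ≤ (μ + α₁ - β) * (α₂ + ((k₂ : ℝ) - 1) * β) + (α₁ - β) * μ
        + (k₁ : ℝ) * β * (α₂ - β + μ) - ((n : ℝ) - 1) * a ^ 2 := hA3
      _ = μ * (α₁ - β + (k₁:ℝ) * β) - a ^ 2 * (k₁:ℝ) + μ * (α₂ - β + (k₂:ℝ) * β)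
          - a ^ 2 * (k₂:ℝ) + (α₁ - β + (k₁:ℝ) * β) * (α₂ - β + (k₂:ℝ) * β)
          - β ^ 2 * (k₁:ℝ) * (k₂:ℝ) := by linear_combination a^2 * hkr
  · -- determinant condition
    rw [hqdef, hrdef]
    calc (0 : ℝ) ≤ (α₁ - β) * (α₂ + ((k₂ : ℝ) - 1) * β) * μ + (k₁ : ℝ) * (α₂ - β) * β * μ
        - a ^ 2 * ((k₁ : ℝ) * (α₂ - β) + (k₂ : ℝ) * (α₁ - β)) := hA4
      _ = μ * (α₁ - β + (k₁:ℝ) * β) * (α₂ - β + (k₂:ℝ) * β)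
            + 2 * (a * r1) * (a * r2) * (β * r1 * r2)
            - μ * (β * r1 * r2) ^ 2 - (α₁ - β + (k₁:ℝ) * β) * (a * r2) ^ 2
            - (α₂ - β + (k₂:ℝ) * β) * (a * r1) ^ 2 := by
        linear_combination (-((2*a^2*β - μ*β^2) * r2^2 - (α₂ - β + (k₂:ℝ)*β) * a^2)) * hr1sq
          + (-((2*a^2*β - μ*β^2) * (k₁:ℝ) - (α₁ - β + (k₁:ℝ)*β) * a^2)) * hr2sq
end

section
/- For any real numbers x₁,…,xₙ with n ≥ 2, one has ∑_{i=2}^{n} x₁xᵢ − ∑_{i=2}^{n} xᵢ² ≤ ((n−1)/(4n))·(∑_{i=1}^{n} xᵢ)², and equality holds if and only if x₂ = ⋯ = xₙ = x₁/(n+1). -/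
open Finset

/-- For real `x₁,…,xₙ` with `n ≥ 2`:
`∑_{i=2}^{n} x₁xᵢ − ∑_{i=2}^{n} xᵢ² ≤ ((n−1)/(4n))·(∑_{i=1}^{n} xᵢ)²`,
with equality iff `x₂ = ⋯ = xₙ = x₁/(n+1)`. -/
theorem deng_lemma_2_2 (n : ℕ) (hn : 2 ≤ n) (x : ℕ → ℝ) :
    (∑ i ∈ Icc 2 n, x 1 * x i) - ∑ i ∈ Icc 2 n, x i ^ 2 ≤
      ((n : ℝ) - 1) / (4 * (n : ℝ)) * (∑ i ∈ Icc 1 n, x i) ^ 2 ∧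
    ((∑ i ∈ Icc 2 n, x 1 * x i) - ∑ i ∈ Icc 2 n, x i ^ 2 =
        ((n : ℝ) - 1) / (4 * (n : ℝ)) * (∑ i ∈ Icc 1 n, x i) ^ 2 ↔
      ∀ i ∈ Icc 2 n, x i = x 1 / ((n : ℝ) + 1)) := by
  have hn2 : (2:ℝ) ≤ (n:ℝ) := by exact_mod_cast hn
  have hm : (n:ℝ) - 1 ≠ 0 := by linarith
  have hn0 : (n:ℝ) ≠ 0 := by linarith
  have hp : (n:ℝ) + 1 ≠ 0 := by linarith
  have hcardN : (Icc 2 n).card = n - 1 := by rw [Nat.card_Icc]; omega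
  have hcard : ((Icc 2 n).card : ℝ) = (n:ℝ) - 1 := by
    rw [hcardN, Nat.cast_sub (by omega : 1 ≤ n), Nat.cast_one]
  set S := ∑ i ∈ Icc 2 n, x i with hSdef
  set c := S / ((n:ℝ) - 1) with hcdef
  have hsplit : ∑ i ∈ Icc 1 n, x i = x 1 + S := by
    have h : Icc 1 n = insert 1 (Icc 2 n) := by
      ext i; simp only [Finset.mem_Icc, Finset.mem_insert]; omega
    rw [h, Finset.sum_insert (by simp only [Finset.mem_Icc]; omega)]
  have hP : ∑ i ∈ Icc 2 n, x 1 * x i = x 1 * S := by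
    rw [hSdef, Finset.mul_sum]
  have hsum_sq : ∑ i ∈ Icc 2 n, (x i - c)^2
      = (∑ i ∈ Icc 2 n, x i ^ 2) - 2*c*S + ((n:ℝ)-1)*c^2 := by
    rw [Finset.sum_congr rfl
      (fun i _ => by ring : ∀ i ∈ Icc 2 n, (x i - c)^2 = x i ^ 2 - (2*c)*x i + c^2)]
    rw [Finset.sum_add_distrib, Finset.sum_sub_distrib, ← Finset.mul_sum,
      Finset.sum_const, nsmul_eq_mul, hcard, ← hSdef]
  have key : ((n:ℝ)-1)/(4*(n:ℝ)) * (x 1 + S)^2 - (x 1 * S - ∑ i ∈ Icc 2 n, x i ^ 2)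
      = (∑ i ∈ Icc 2 n, (x i - c)^2)
        + ((n:ℝ)-1)/(4*(n:ℝ)) * (x 1 - ((n:ℝ)+1)/((n:ℝ)-1) * S)^2 := by
    rw [hsum_sq, hcdef]
    field_simp
    ring
  have hA : 0 ≤ ∑ i ∈ Icc 2 n, (x i - c)^2 :=
    Finset.sum_nonneg fun i _ => sq_nonneg _
  have hB : 0 ≤ ((n:ℝ)-1)/(4*(n:ℝ)) * (x 1 - ((n:ℝ)+1)/((n:ℝ)-1) * S)^2 :=
    mul_nonneg (div_nonneg (by linarith) (by linarith)) (sq_nonneg _)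
  constructor
  · rw [hP, hsplit]; linarith
  · rw [hP, hsplit]
    constructor
    · intro h
      have h1 : ∑ i ∈ Icc 2 n, (x i - c)^2 = 0 := le_antisymm (by linarith) hA
      have h2 : ((n:ℝ)-1)/(4*(n:ℝ)) * (x 1 - ((n:ℝ)+1)/((n:ℝ)-1) * S)^2 = 0 := by linarith
      have hcoef : (0:ℝ) < ((n:ℝ)-1)/(4*(n:ℝ)) := by
        apply div_pos <;> linarith
      have hsq : (x 1 - ((n:ℝ)+1)/((n:ℝ)-1) * S)^2 = 0 := by
        rcases mul_eq_zero.mp h2 with h | h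
        · exact absurd h (ne_of_gt hcoef)
        · exact h
      have hx1 : x 1 = ((n:ℝ)+1)/((n:ℝ)-1) * S := by
        have := (pow_eq_zero_iff two_ne_zero).mp hsq
        linarith [sub_eq_zero.mp this]
      intro i hi
      have hxi : x i = c := by
        have h0 := (Finset.sum_eq_zero_iff_of_nonneg (fun j _ => sq_nonneg _)).mp h1 i hi
        have := (pow_eq_zero_iff two_ne_zero).mp h0
        linarith [sub_eq_zero.mp this]
      rw [hxi, hcdef, hx1]
      field_simp
    · intro h
      have hSval : S = ((n:ℝ)-1) * (x 1 / ((n:ℝ)+1)) := by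
        rw [hSdef, Finset.sum_congr rfl h, Finset.sum_const, nsmul_eq_mul, hcard]
      have hc : c = x 1 / ((n:ℝ)+1) := by
        rw [hcdef, hSval]; field_simp
      have h1 : ∑ i ∈ Icc 2 n, (x i - c)^2 = 0 :=
        Finset.sum_eq_zero fun i hi => by rw [h i hi, hc, sub_self]; ring
      have h2 : ((n:ℝ)-1)/(4*(n:ℝ)) * (x 1 - ((n:ℝ)+1)/((n:ℝ)-1) * S)^2 = 0 := by
        have : x 1 - ((n:ℝ)+1)/((n:ℝ)-1) * S = 0 := by
          rw [hSval]; field_simp; ring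
        rw [this]; ring
      linarith
end

section
/- For any real numbers x₁,…,xₙ with n ≥ 2, one has ∑_{i=2}^{n} x₁xᵢ − x₁² ≤ (1/8)·(∑_{i=1}^{n} xᵢ)², and equality holds if and only if x₂ + ⋯ + xₙ = 3x₁. -/
open Finset

/-- For real `x₁,…,xₙ` with `n ≥ 2`:
`∑_{i=2}^{n} x₁xᵢ − x₁² ≤ (1/8)·(∑_{i=1}^{n} xᵢ)²`,
with equality iff `x₂ + ⋯ + xₙ = 3x₁`. -/
theorem deng_lemma_3_3 (n : ℕ) (hn : 2 ≤ n) (x : ℕ → ℝ) :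
    (∑ i ∈ Icc 2 n, x 1 * x i) - x 1 ^ 2 ≤
      (1 / 8 : ℝ) * (∑ i ∈ Icc 1 n, x i) ^ 2 ∧
    ((∑ i ∈ Icc 2 n, x 1 * x i) - x 1 ^ 2 =
        (1 / 8 : ℝ) * (∑ i ∈ Icc 1 n, x i) ^ 2 ↔
      ∑ i ∈ Icc 2 n, x i = 3 * x 1) := by
  have hins : Icc 1 n = insert 1 (Icc 2 n) := by
    ext i; simp [Finset.mem_insert, Finset.mem_Icc]; omega
  have h1 : ∑ i ∈ Icc 1 n, x i = x 1 + ∑ i ∈ Icc 2 n, x i := by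
    rw [hins, Finset.sum_insert (by simp)]
  have h2 : ∑ i ∈ Icc 2 n, x 1 * x i = x 1 * ∑ i ∈ Icc 2 n, x i := by
    rw [Finset.mul_sum]
  set a := x 1
  set S := ∑ i ∈ Icc 2 n, x i
  rw [h1, h2]
  refine ⟨by nlinarith [sq_nonneg (S - 3 * a)], ?_, fun h => by rw [h]; ring⟩
  intro h
  have hsq : (S - 3 * a) ^ 2 = 0 := by nlinarith
  have := pow_eq_zero_iff (n := 2) (by norm_num) |>.mp hsq
  linarith [sub_eq_zero.mp this]
end

section
/- For any real numbers x₁,…,xₙ with n ≥ 3, one has −(n−2)·∑_{i=2}^{n} xᵢ² + (n−2)·∑_{i=2}^{n} x₁xᵢ + (n−1)·∑_{2≤i<j≤n} xᵢxⱼ ≤ ((n−2)(n−1)/(2(n+1)))·(∑_{i=1}^{n} xᵢ)², and equality holds if and only if x₂ = ⋯ = xₙ = x₁/2. -/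
open Finset

lemma sq_sum_identity (n : ℕ) (x : ℕ → ℝ) :
    (∑ i ∈ Icc 2 n, x i) ^ 2 =
      ∑ i ∈ Icc 2 n, x i ^ 2 + 2 * ∑ i ∈ Icc 2 n, ∑ j ∈ Icc (i + 1) n, x i * x j := by
  induction n with
  | zero => simp
  | succ n ih =>
    rcases Nat.lt_or_ge n 1 with h | h
    · interval_cases n <;> simp
    · rw [← Finset.insert_Icc_right_eq_Icc_add_one (by omega : 2 ≤ n + 1)]
      rw [Finset.sum_insert (by simp), Finset.sum_insert (by simp), Finset.sum_insert (by simp)]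
      have hinner : ∀ i ∈ Icc 2 n, ∑ j ∈ Icc (i+1) (n+1), x i * x j
          = x i * x (n+1) + ∑ j ∈ Icc (i+1) n, x i * x j := by
        intro i hi
        rw [mem_Icc] at hi
        rw [← Finset.insert_Icc_right_eq_Icc_add_one (by omega), Finset.sum_insert (by simp)]
      rw [Finset.sum_congr rfl hinner]
      have : Icc (n+1+1) (n+1) = (∅ : Finset ℕ) := by
        apply Finset.Icc_eq_empty; omega
      rw [this, Finset.sum_empty, Finset.sum_add_distrib, ← Finset.sum_mul]
      nlinarith [ih]

set_option maxHeartbeats 1000000 in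
/-- For real `x₁,…,xₙ` with `n ≥ 3`:
`−(n−2)∑_{i=2}^{n} xᵢ² + (n−2)∑_{i=2}^{n} x₁xᵢ + (n−1)∑_{2≤i<j≤n} xᵢxⱼ
  ≤ ((n−2)(n−1)/(2(n+1)))·(∑_{i=1}^{n} xᵢ)²`,
with equality iff `x₂ = ⋯ = xₙ = x₁/2`. -/
theorem oprea_ineq_4_14 (n : ℕ) (hn : 3 ≤ n) (x : ℕ → ℝ) :
    -((n : ℝ) - 2) * (∑ i ∈ Icc 2 n, x i ^ 2)
      + ((n : ℝ) - 2) * (∑ i ∈ Icc 2 n, x 1 * x i)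
      + ((n : ℝ) - 1) * (∑ i ∈ Icc 2 n, ∑ j ∈ Icc (i + 1) n, x i * x j) ≤
      ((n : ℝ) - 2) * ((n : ℝ) - 1) / (2 * ((n : ℝ) + 1)) * (∑ i ∈ Icc 1 n, x i) ^ 2 ∧
    (-((n : ℝ) - 2) * (∑ i ∈ Icc 2 n, x i ^ 2)
        + ((n : ℝ) - 2) * (∑ i ∈ Icc 2 n, x 1 * x i)
        + ((n : ℝ) - 1) * (∑ i ∈ Icc 2 n, ∑ j ∈ Icc (i + 1) n, x i * x j) =
        ((n : ℝ) - 2) * ((n : ℝ) - 1) / (2 * ((n : ℝ) + 1)) * (∑ i ∈ Icc 1 n, x i) ^ 2 ↔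
      ∀ i ∈ Icc 2 n, x i = x 1 / 2) := by
  have hn3 : (3 : ℝ) ≤ (n : ℝ) := by exact_mod_cast hn
  set c : ℝ := (n : ℝ) - 1 with hc
  set S : ℝ := ∑ i ∈ Icc 2 n, x i with hS
  set Q : ℝ := ∑ i ∈ Icc 2 n, x i ^ 2 with hQ
  set P : ℝ := ∑ i ∈ Icc 2 n, ∑ j ∈ Icc (i + 1) n, x i * x j with hP
  set W : ℝ := ∑ i ∈ Icc 2 n, x 1 * x i with hW
  -- basic facts
  have hcard : ((Icc 2 n).card : ℝ) = c := by
    rw [Nat.card_Icc]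
    have : n + 1 - 2 = n - 1 := by omega
    rw [this, Nat.cast_sub (by omega)]
    simp [hc]
  have hW' : W = x 1 * S := by rw [hW, hS, Finset.mul_sum]
  have hPQ : S ^ 2 = Q + 2 * P := sq_sum_identity n x
  have hsum1 : ∑ i ∈ Icc 1 n, x i = x 1 + S := by
    rw [← Finset.insert_Icc_add_one_left_eq_Icc (by omega : 1 ≤ n), Finset.sum_insert (by simp)]; rfl
  -- Cauchy part
  set T : ℝ := ∑ i ∈ Icc 2 n, (c * x i - S) ^ 2 with hT
  have hTval : T = c ^ 2 * Q - c * S ^ 2 := by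
    have : ∀ i ∈ Icc 2 n, (c * x i - S) ^ 2
        = c ^ 2 * x i ^ 2 - 2 * c * S * x i + S ^ 2 := fun i _ => by ring
    rw [hT, Finset.sum_congr rfl this, Finset.sum_add_distrib, Finset.sum_sub_distrib,
      Finset.sum_const, ← Finset.mul_sum, ← Finset.mul_sum, nsmul_eq_mul, hcard]
    rw [← hQ, ← hS]; ring
  have hT0 : 0 ≤ T := Finset.sum_nonneg fun i _ => sq_nonneg _
  set U : ℝ := c * x 1 - 2 * S with hU
  -- key identity
  have hkey : 2 * ((n : ℝ) + 1) * c ^ 2 *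
      (((n : ℝ) - 2) * ((n : ℝ) - 1) / (2 * ((n : ℝ) + 1)) * (x 1 + S) ^ 2
        - (-((n : ℝ) - 2) * Q + ((n : ℝ) - 2) * (x 1 * S) + ((n : ℝ) - 1) * P))
      = (3 * (n : ℝ) - 5) * ((n : ℝ) + 1) * T + ((n : ℝ) - 2) * ((n : ℝ) - 1) * U ^ 2 := by
    have hne : (n : ℝ) + 1 ≠ 0 := by nlinarith
    have h2P : P = (S ^ 2 - Q) / 2 := by linarith [hPQ]
    rw [hTval, hU, hc, h2P]
    field_simp
    ring
  have hU0 : 0 ≤ U ^ 2 := sq_nonneg _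
  have hcpos : (0:ℝ) < c := by rw [hc]; linarith
  have hKpos : (0:ℝ) < 2 * ((n : ℝ) + 1) * c ^ 2 := by positivity
  have hApos : (0:ℝ) < (3 * (n : ℝ) - 5) * ((n : ℝ) + 1) := by nlinarith
  have hBpos : (0:ℝ) < ((n : ℝ) - 2) * ((n : ℝ) - 1) := by nlinarith
  rw [hsum1, hW']
  set L : ℝ := -((n : ℝ) - 2) * Q + ((n : ℝ) - 2) * (x 1 * S) + ((n : ℝ) - 1) * P with hL
  set R : ℝ := ((n : ℝ) - 2) * ((n : ℝ) - 1) / (2 * ((n : ℝ) + 1)) * (x 1 + S) ^ 2 with hR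
  have hRL : ∀ t u : ℝ, T = t → U = u →
      2 * ((n : ℝ) + 1) * c ^ 2 * (R - L)
        = (3 * (n : ℝ) - 5) * ((n : ℝ) + 1) * t + ((n : ℝ) - 2) * ((n : ℝ) - 1) * u ^ 2 := by
    intro t u ht hu; rw [← ht, ← hu]; exact hkey
  clear_value c S Q P W T U L R
  have hineq : L ≤ R := by
    have h1 : 0 ≤ (3 * (n : ℝ) - 5) * ((n : ℝ) + 1) * T + ((n : ℝ) - 2) * ((n : ℝ) - 1) * U ^ 2 :=
      add_nonneg (mul_nonneg hApos.le hT0) (mul_nonneg hBpos.le hU0)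
    have h2 : 0 ≤ 2 * ((n : ℝ) + 1) * c ^ 2 * (R - L) := by rw [hkey]; exact h1
    by_contra hcon
    push_neg at hcon
    have h3 := mul_pos hKpos (by linarith : (0:ℝ) < L - R)
    have h4 : 2 * ((n : ℝ) + 1) * c ^ 2 * (R - L)
        = -(2 * ((n : ℝ) + 1) * c ^ 2 * (L - R)) := by ring
    linarith
  refine ⟨hineq, ?_, ?_⟩
  · intro heq
    have hAB : (3 * (n : ℝ) - 5) * ((n : ℝ) + 1) * T + ((n : ℝ) - 2) * ((n : ℝ) - 1) * U ^ 2 = 0 := by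
      rw [← hkey, heq]; ring
    have hATz : (3 * (n : ℝ) - 5) * ((n : ℝ) + 1) * T = 0 :=
      le_antisymm (by linarith [mul_nonneg hBpos.le hU0]) (mul_nonneg hApos.le hT0)
    have hBUz : ((n : ℝ) - 2) * ((n : ℝ) - 1) * U ^ 2 = 0 :=
      le_antisymm (by linarith [mul_nonneg hApos.le hT0]) (mul_nonneg hBpos.le hU0)
    have hTz : T = 0 := by
      rcases mul_eq_zero.mp hATz with h' | h'
      · exact absurd h' (ne_of_gt hApos)
      · exact h'
    have hUz : U = 0 := by
      have hu2 : U ^ 2 = 0 := by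
        rcases mul_eq_zero.mp hBUz with h' | h'
        · exact absurd h' (ne_of_gt hBpos)
        · exact h'
      exact pow_eq_zero_iff (by norm_num) |>.mp hu2
    intro i hi
    have h1 : c * x i = S := by
      have h0 := (Finset.sum_eq_zero_iff_of_nonneg
        (fun j _ => sq_nonneg (c * x j - S))).mp (hT.symm.trans hTz) i hi
      have h2 : c * x i - S = 0 := pow_eq_zero_iff (by norm_num) |>.mp h0
      linarith
    have h2 : c * x 1 = 2 * S := by rw [hU] at hUz; linarith
    have h3 : c * x i = c * (x 1 / 2) := by rw [h1]; linarith
    exact mul_left_cancel₀ (ne_of_gt hcpos) h3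
  · intro h
    have hSv : S = c * (x 1 / 2) := by
      rw [hS, Finset.sum_congr rfl h, Finset.sum_const, nsmul_eq_mul, hcard]
    have hTz : T = 0 := by
      rw [hT]
      apply Finset.sum_eq_zero
      intro i hi
      rw [h i hi, hSv]
      ring
    have hUz : U = 0 := by rw [hU, hSv]; ring
    have hk2 := hRL 0 0 hTz hUz
    have : 2 * ((n : ℝ) + 1) * c ^ 2 * (R - L) = 0 := by rw [hk2]; ring
    have hD : R - L = 0 := by
      rcases mul_eq_zero.mp this with h' | h'
      · exact absurd h' (ne_of_gt hKpos)
      · exact h'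
    linarith
end

section
/- Let y₁,…,yₙ be real numbers with n ≥ 3, and let r be an integer with 2 ≤ r ≤ n. Then −(n−2)y₁² − (n−1)·∑_{1≤i≤n, i≠1, i≠r} yᵢ² + (n−2)·∑_{i=2}^{n} y₁yᵢ + (n−1)·∑_{2≤i<j≤n} yᵢyⱼ ≤ ((3n−1)(n−2)/(2(3n+5)))·(∑_{i=1}^{n} yᵢ)², and equality holds if and only if y₂ = ⋯ = y_{r−1} = y_{r+1} = ⋯ = yₙ = (3/2)y₁ and y_r = (9/2)y₁. -/
open Finset

set_option maxHeartbeats 1000000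

/-- Square of a sum over `Icc 2 m` expands into diagonal plus twice the upper triangle. -/
lemma aux_sq_sum (y : ℕ → ℝ) : ∀ m : ℕ,
    (∑ i ∈ Icc 2 m, y i) ^ 2 =
      (∑ i ∈ Icc 2 m, y i ^ 2) + 2 * ∑ i ∈ Icc 2 m, ∑ j ∈ Icc (i + 1) m, y i * y j := by
  intro m
  induction m with
  | zero => simp
  | succ m ih =>
    rcases Nat.eq_zero_or_pos m with hm | hm
    · subst hm
      have h : Icc 2 1 = (∅ : Finset ℕ) := Icc_eq_empty (by omega)
      simp [h]
    · have h1 : Icc 2 (m + 1) = insert (m + 1) (Icc 2 m) := by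
        ext i; simp only [mem_Icc, mem_insert]; omega
      have h2 : (m + 1) ∉ Icc 2 m := by simp only [mem_Icc]; omega
      have h3 : ∀ i ∈ Icc 2 m, Icc (i + 1) (m + 1) = insert (m + 1) (Icc (i + 1) m) := by
        intro i hi; simp only [mem_Icc] at hi; ext j; simp only [mem_Icc, mem_insert]; omega
      have h4 : ∀ i ∈ Icc 2 m, (m + 1) ∉ Icc (i + 1) m := by
        intro i hi; simp only [mem_Icc]; omega
      have hempty : Icc (m + 1 + 1) (m + 1) = (∅ : Finset ℕ) := Icc_eq_empty (by omega)
      have h5 : ∑ i ∈ Icc 2 m, ∑ j ∈ Icc (i + 1) (m + 1), y i * y j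
          = ∑ i ∈ Icc 2 m, (y i * y (m + 1) + ∑ j ∈ Icc (i + 1) m, y i * y j) :=
        Finset.sum_congr rfl (fun i hi => by rw [h3 i hi, sum_insert (h4 i hi)])
      rw [h1, sum_insert h2, sum_insert h2, sum_insert h2, hempty, h5,
        sum_add_distrib, ← sum_mul]
      simp only [sum_empty]
      linear_combination ih

/-- For real `y₁,…,yₙ` with `n ≥ 3` and an integer `2 ≤ r ≤ n`:
`−(n−2)y₁² − (n−1)∑_{i≠1,r} yᵢ² + (n−2)∑_{i=2}^{n} y₁yᵢ + (n−1)∑_{2≤i<j≤n} yᵢyⱼ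
  ≤ ((3n−1)(n−2)/(2(3n+5)))·(∑_{i=1}^{n} yᵢ)²`,
with equality iff `yᵢ = (3/2)y₁` for `i ≠ 1, r` and `y_r = (9/2)y₁`. -/
theorem oprea_ineq_4_27 (n : ℕ) (hn : 3 ≤ n) (r : ℕ) (hr1 : 2 ≤ r) (hr2 : r ≤ n)
    (y : ℕ → ℝ) :
    -((n : ℝ) - 2) * y 1 ^ 2
      - ((n : ℝ) - 1) * (∑ i ∈ (Icc 1 n).filter (fun i => i ≠ 1 ∧ i ≠ r), y i ^ 2)
      + ((n : ℝ) - 2) * (∑ i ∈ Icc 2 n, y 1 * y i)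
      + ((n : ℝ) - 1) * (∑ i ∈ Icc 2 n, ∑ j ∈ Icc (i + 1) n, y i * y j) ≤
      (3 * (n : ℝ) - 1) * ((n : ℝ) - 2) / (2 * (3 * (n : ℝ) + 5)) * (∑ i ∈ Icc 1 n, y i) ^ 2 ∧
    (-((n : ℝ) - 2) * y 1 ^ 2
        - ((n : ℝ) - 1) * (∑ i ∈ (Icc 1 n).filter (fun i => i ≠ 1 ∧ i ≠ r), y i ^ 2)
        + ((n : ℝ) - 2) * (∑ i ∈ Icc 2 n, y 1 * y i)
        + ((n : ℝ) - 1) * (∑ i ∈ Icc 2 n, ∑ j ∈ Icc (i + 1) n, y i * y j) =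
        (3 * (n : ℝ) - 1) * ((n : ℝ) - 2) / (2 * (3 * (n : ℝ) + 5)) * (∑ i ∈ Icc 1 n, y i) ^ 2 ↔
      (∀ i ∈ Icc 2 n, i ≠ r → y i = 3 / 2 * y 1) ∧ y r = 9 / 2 * y 1) := by
  set N : ℝ := (n : ℝ) with hNdef
  set F : Finset ℕ := (Icc 1 n).filter (fun i => i ≠ 1 ∧ i ≠ r) with hFdef
  set a : ℝ := y 1 with hadef
  set b : ℝ := y r with hbdef
  set P : ℝ := ∑ i ∈ F, y i with hPdef
  set Q : ℝ := ∑ i ∈ F, y i ^ 2 with hQdef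
  have hN3 : (3 : ℝ) ≤ N := by rw [hNdef]; exact_mod_cast hn
  have hN2pos : (0 : ℝ) < N - 2 := by linarith
  have hN1pos : (0 : ℝ) < N - 1 := by linarith
  have h35pos : (0 : ℝ) < 3 * N + 5 := by linarith
  have h31pos : (0 : ℝ) < 31 * N - 29 := by linarith
  have hrmem : r ∈ Icc 2 n := by simp only [mem_Icc]; omega
  have hF2 : F = (Icc 2 n).erase r := by
    rw [hFdef]; ext i
    simp only [mem_filter, mem_Icc, mem_erase]
    omega
  have hsum2 : ∑ i ∈ Icc 2 n, y i = b + P := by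
    rw [hPdef, hF2, ← Finset.sum_erase_add (Icc 2 n) y hrmem]; ring
  have hsum2sq : ∑ i ∈ Icc 2 n, y i ^ 2 = b ^ 2 + Q := by
    rw [hQdef, hF2, ← Finset.sum_erase_add (Icc 2 n) (fun i => y i ^ 2) hrmem]; ring
  have hicc1 : Icc 1 n = insert 1 (Icc 2 n) := by
    ext i; simp only [mem_Icc, mem_insert]; omega
  have h1not : (1 : ℕ) ∉ Icc 2 n := by simp
  have hsum1 : ∑ i ∈ Icc 1 n, y i = a + (b + P) := by
    rw [hicc1, Finset.sum_insert h1not, hsum2]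
  have hmul : ∑ i ∈ Icc 2 n, a * y i = a * (b + P) := by
    rw [← Finset.mul_sum, hsum2]
  have hDS : ∑ i ∈ Icc 2 n, ∑ j ∈ Icc (i + 1) n, y i * y j
      = ((b + P) ^ 2 - (b ^ 2 + Q)) / 2 := by
    have h := aux_sq_sum y n
    rw [hsum2, hsum2sq] at h
    linarith
  have hcardF : F.card = n - 2 := by
    rw [hF2, card_erase_of_mem hrmem, Nat.card_Icc]; omega
  have hcard : (F.card : ℝ) = N - 2 := by
    rw [hcardF, Nat.cast_sub (by omega : 2 ≤ n)]; norm_num; exact hNdef.symm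
  have hCS : P ^ 2 ≤ (N - 2) * Q := by
    have h := sq_sum_le_card_mul_sum_sq (s := F) (f := y)
    rwa [hcard, ← hPdef, ← hQdef] at h
  have hgsq : ∑ i ∈ F, (y i - 3 / 2 * a) ^ 2 = Q - 3 * a * P + 9 / 4 * (N - 2) * a ^ 2 := by
    have he : ∀ i ∈ F, (y i - 3 / 2 * a) ^ 2 = y i ^ 2 - 3 * a * y i + 9 / 4 * a ^ 2 :=
      fun i _ => by ring
    rw [Finset.sum_congr rfl he, sum_add_distrib, sum_sub_distrib, ← Finset.mul_sum,
      sum_const, nsmul_eq_mul, hcard, ← hPdef, ← hQdef]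
    ring
  -- the master sum-of-squares identity
  have key : 4 * (N - 2) * (3 * N + 5) * (31 * N - 29) *
      ((3 * N - 1) * (N - 2) / (2 * (3 * N + 5)) * (a + (b + P)) ^ 2 -
        (-(N - 2) * a ^ 2 - (N - 1) * Q + (N - 2) * (a * (b + P)) +
          (N - 1) * (((b + P) ^ 2 - (b ^ 2 + Q)) / 2))) =
      6 * (N - 1) * (3 * N + 5) * (31 * N - 29) * ((N - 2) * Q - P ^ 2) +
      2 * ((31 * N - 29) * (P - 3 / 2 * (N - 2) * a) + (7 - 9 * N) * (N - 2) * (b - 9 / 2 * a)) ^ 2 +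
      8 * (N - 1) * (N - 2) ^ 2 * (3 * N + 5) * (b - 9 / 2 * a) ^ 2 := by
    have h35 : (2 : ℝ) * (3 * N + 5) ≠ 0 := by positivity
    field_simp
    ring
  have hM : (0 : ℝ) < 4 * (N - 2) * (3 * N + 5) * (31 * N - 29) :=
    mul_pos (mul_pos (mul_pos (by norm_num) hN2pos) h35pos) h31pos
  have hc1 : (0 : ℝ) < 6 * (N - 1) * (3 * N + 5) * (31 * N - 29) :=
    mul_pos (mul_pos (mul_pos (by norm_num) hN1pos) h35pos) h31pos
  have hc3 : (0 : ℝ) < 8 * (N - 1) * (N - 2) ^ 2 * (3 * N + 5) :=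
    mul_pos (mul_pos (mul_pos (by norm_num) hN1pos) (by positivity)) h35pos
  have ht1nn : 0 ≤ 6 * (N - 1) * (3 * N + 5) * (31 * N - 29) * ((N - 2) * Q - P ^ 2) :=
    mul_nonneg hc1.le (by linarith)
  have ht2nn : 0 ≤ 2 * ((31 * N - 29) * (P - 3 / 2 * (N - 2) * a) +
      (7 - 9 * N) * (N - 2) * (b - 9 / 2 * a)) ^ 2 := by positivity
  have ht3nn : 0 ≤ 8 * (N - 1) * (N - 2) ^ 2 * (3 * N + 5) * (b - 9 / 2 * a) ^ 2 :=
    mul_nonneg hc3.le (sq_nonneg _)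
  rw [hsum1, hmul, hDS]
  have hRL : 0 ≤ (3 * N - 1) * (N - 2) / (2 * (3 * N + 5)) * (a + (b + P)) ^ 2 -
      (-(N - 2) * a ^ 2 - (N - 1) * Q + (N - 2) * (a * (b + P)) +
        (N - 1) * (((b + P) ^ 2 - (b ^ 2 + Q)) / 2)) := by
    have h0 : 0 ≤ 4 * (N - 2) * (3 * N + 5) * (31 * N - 29) *
        ((3 * N - 1) * (N - 2) / (2 * (3 * N + 5)) * (a + (b + P)) ^ 2 -
          (-(N - 2) * a ^ 2 - (N - 1) * Q + (N - 2) * (a * (b + P)) +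
            (N - 1) * (((b + P) ^ 2 - (b ^ 2 + Q)) / 2))) := by
      rw [key]; linarith
    exact (mul_nonneg_iff_of_pos_left hM).mp h0
  constructor
  · -- the inequality
    linarith
  · constructor
    · -- equality implies the configuration
      intro heq
      have h0 : 6 * (N - 1) * (3 * N + 5) * (31 * N - 29) * ((N - 2) * Q - P ^ 2) +
          2 * ((31 * N - 29) * (P - 3 / 2 * (N - 2) * a) +
            (7 - 9 * N) * (N - 2) * (b - 9 / 2 * a)) ^ 2 +
          8 * (N - 1) * (N - 2) ^ 2 * (3 * N + 5) * (b - 9 / 2 * a) ^ 2 = 0 := by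
        rw [← key, heq]
        ring
      have ht3 : 8 * (N - 1) * (N - 2) ^ 2 * (3 * N + 5) * (b - 9 / 2 * a) ^ 2 = 0 := by
        linarith
      have ht2 : 2 * ((31 * N - 29) * (P - 3 / 2 * (N - 2) * a) +
          (7 - 9 * N) * (N - 2) * (b - 9 / 2 * a)) ^ 2 = 0 := by
        linarith
      have ht1' : 6 * (N - 1) * (3 * N + 5) * (31 * N - 29) * ((N - 2) * Q - P ^ 2) = 0 := by
        linarith
      have ht1 : (N - 2) * Q - P ^ 2 = 0 :=
        (mul_eq_zero.mp ht1').resolve_left hc1.ne'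
      have hw0 : b - 9 / 2 * a = 0 := by
        have h := (mul_eq_zero.mp ht3).resolve_left hc3.ne'
        exact sq_eq_zero_iff.mp h
      have hU0 : (31 * N - 29) * (P - 3 / 2 * (N - 2) * a) +
          (7 - 9 * N) * (N - 2) * (b - 9 / 2 * a) = 0 := by
        have h : ((31 * N - 29) * (P - 3 / 2 * (N - 2) * a) +
            (7 - 9 * N) * (N - 2) * (b - 9 / 2 * a)) ^ 2 = 0 := by linarith
        exact sq_eq_zero_iff.mp h
      have hP0 : P - 3 / 2 * (N - 2) * a = 0 := by
        rw [hw0, mul_zero, add_zero] at hU0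
        exact (mul_eq_zero.mp hU0).resolve_left h31pos.ne'
      have hQz0 : (N - 2) * (∑ i ∈ F, (y i - 3 / 2 * a) ^ 2) = 0 := by
        rw [hgsq]
        linear_combination ht1 + (P - 3 / 2 * (N - 2) * a) * hP0
      have hsum0 : ∑ i ∈ F, (y i - 3 / 2 * a) ^ 2 = 0 :=
        (mul_eq_zero.mp hQz0).resolve_left hN2pos.ne'
      have hall : ∀ i ∈ F, (y i - 3 / 2 * a) ^ 2 = 0 :=
        (Finset.sum_eq_zero_iff_of_nonneg (fun i _ => sq_nonneg _)).mp hsum0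
      constructor
      · intro i hi hir
        have hiF : i ∈ F := by
          rw [hF2, mem_erase]; exact ⟨hir, hi⟩
        have h := sq_eq_zero_iff.mp (hall i hiF)
        linarith
      · linarith [hw0]
    · -- the configuration implies equality
      rintro ⟨h2, h3⟩
      have hb : b = 9 / 2 * a := h3
      have hyi : ∀ i ∈ F, y i = 3 / 2 * a := by
        intro i hi
        rw [hF2, mem_erase, mem_Icc] at hi
        exact h2 i (by simp only [mem_Icc]; omega) hi.1
      have hPsum : ∑ i ∈ F, y i = ∑ _i ∈ F, (3 / 2 * a : ℝ) := Finset.sum_congr rfl hyi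
      have hQsum : ∑ i ∈ F, y i ^ 2 = ∑ _i ∈ F, ((3 / 2 * a : ℝ) ^ 2) :=
        Finset.sum_congr rfl (fun i hi => by rw [hyi i hi])
      have hPv : P = (N - 2) * (3 / 2 * a) := by
        rw [hPdef, hPsum, sum_const, nsmul_eq_mul, hcard]
      have hQv : Q = (N - 2) * (3 / 2 * a) ^ 2 := by
        rw [hQdef, hQsum, sum_const, nsmul_eq_mul, hcard]
      rw [hb, hPv, hQv]
      field_simp
      ring
end

section
/- For any real numbers x₁,…,xₙ with n ≥ 3, one has −(n−2)x₁² − (n−1)·∑_{i=3}^{n} xᵢ² + (n−2)·∑_{i=2}^{n} x₁xᵢ + (n−1)·∑_{2≤i<j≤n} xᵢxⱼ ≤ ((3n−1)(n−2)/(2(3n+5)))·(∑_{i=1}^{n} xᵢ)², and equality holds if and only if x₃ = ⋯ = xₙ = (3/2)x₁ and x₂ = (9/2)x₁. -/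
open Finset

lemma pair_sum (x : ℕ → ℝ) (a : ℕ) : ∀ n : ℕ,
    2 * (∑ i ∈ Icc a n, ∑ j ∈ Icc (i+1) n, x i * x j)
      = (∑ i ∈ Icc a n, x i) ^ 2 - ∑ i ∈ Icc a n, x i ^ 2 := by
  intro n
  induction n with
  | zero =>
    rcases Nat.eq_zero_or_pos a with rfl | ha
    · have h0 : Icc 0 0 = {0} := Icc_self 0
      have h1 : Icc 1 0 = (∅ : Finset ℕ) := by simp
      simp [h0, h1]
    · rw [Icc_eq_empty (by omega)]; simp
  | succ n ih =>
    by_cases h : a ≤ n + 1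
    · rw [← Finset.insert_Icc_right_eq_Icc_add_one h, sum_insert (by simp), sum_insert (by simp),
        sum_insert (by simp)]
      have hempty : Icc (n + 1 + 1) (n + 1) = (∅ : Finset ℕ) := by simp
      have hinner : ∀ i ∈ Icc a n, ∑ j ∈ Icc (i+1) (n+1), x i * x j
          = (∑ j ∈ Icc (i+1) n, x i * x j) + x i * x (n+1) := by
        intro i hi
        rw [mem_Icc] at hi
        rw [← Finset.insert_Icc_right_eq_Icc_add_one (by omega), sum_insert (by simp)]
        ring
      rw [sum_congr rfl hinner, sum_add_distrib, ← sum_mul, hempty, sum_empty]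
      linear_combination ih
    · rw [Icc_eq_empty (by omega)]; simp

set_option maxHeartbeats 1600000 in
/-- For real `x₁,…,xₙ` with `n ≥ 3`:
`−(n−2)x₁² − (n−1)∑_{i=3}^{n} xᵢ² + (n−2)∑_{i=2}^{n} x₁xᵢ + (n−1)∑_{2≤i<j≤n} xᵢxⱼ
  ≤ ((3n−1)(n−2)/(2(3n+5)))·(∑_{i=1}^{n} xᵢ)²`,
with equality iff `x₃ = ⋯ = xₙ = (3/2)x₁` and `x₂ = (9/2)x₁`. -/
theorem oprea_ineq_eq3_2 (n : ℕ) (hn : 3 ≤ n) (x : ℕ → ℝ) :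
    -((n : ℝ) - 2) * x 1 ^ 2
      - ((n : ℝ) - 1) * (∑ i ∈ Icc 3 n, x i ^ 2)
      + ((n : ℝ) - 2) * (∑ i ∈ Icc 2 n, x 1 * x i)
      + ((n : ℝ) - 1) * (∑ i ∈ Icc 2 n, ∑ j ∈ Icc (i + 1) n, x i * x j) ≤
      (3 * (n : ℝ) - 1) * ((n : ℝ) - 2) / (2 * (3 * (n : ℝ) + 5)) * (∑ i ∈ Icc 1 n, x i) ^ 2 ∧
    (-((n : ℝ) - 2) * x 1 ^ 2
        - ((n : ℝ) - 1) * (∑ i ∈ Icc 3 n, x i ^ 2)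
        + ((n : ℝ) - 2) * (∑ i ∈ Icc 2 n, x 1 * x i)
        + ((n : ℝ) - 1) * (∑ i ∈ Icc 2 n, ∑ j ∈ Icc (i + 1) n, x i * x j) =
        (3 * (n : ℝ) - 1) * ((n : ℝ) - 2) / (2 * (3 * (n : ℝ) + 5)) * (∑ i ∈ Icc 1 n, x i) ^ 2 ↔
      (∀ i ∈ Icc 3 n, x i = 3 / 2 * x 1) ∧ x 2 = 9 / 2 * x 1) := by
  have hnR : (3 : ℝ) ≤ (n : ℝ) := by exact_mod_cast hn
  set m : ℝ := (n : ℝ) - 2 with hm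
  have hm1 : (1 : ℝ) ≤ m := by rw [hm]; linarith
  have hm0 : (0 : ℝ) < m := by linarith
  set T : ℝ := ∑ i ∈ Icc 3 n, x i with hT
  set Q : ℝ := ∑ i ∈ Icc 3 n, x i ^ 2 with hQ
  have eA : Icc 2 n = insert 2 (Icc 3 n) := by
    ext i; simp only [mem_Icc, mem_insert]; omega
  have eB : Icc 1 n = insert 1 (insert 2 (Icc 3 n)) := by
    ext i; simp only [mem_Icc, mem_insert]; omega
  have h2notin : (2 : ℕ) ∉ Icc 3 n := by simp
  have h1notin : (1 : ℕ) ∉ insert 2 (Icc 3 n) := by simp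
  have hcardR : (((Icc 3 n).card : ℝ)) = m := by
    rw [Nat.card_Icc, hm]
    have : n + 1 - 3 = n - 2 := by omega
    rw [this, Nat.cast_sub (by omega)]
    norm_num
  -- sum rewrites
  have e1 : ∑ i ∈ Icc 2 n, x 1 * x i = x 1 * x 2 + x 1 * T := by
    rw [eA, sum_insert h2notin, ← mul_sum]
  have e2 : ∑ i ∈ Icc 1 n, x i = x 1 + x 2 + T := by
    rw [eB, sum_insert h1notin, sum_insert h2notin]; ring
  have e3 : (∑ i ∈ Icc 2 n, ∑ j ∈ Icc (i + 1) n, x i * x j)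
      = ((x 2 + T) ^ 2 - (x 2 ^ 2 + Q)) / 2 := by
    have hp := pair_sum x 2 n
    have s1 : ∑ i ∈ Icc 2 n, x i = x 2 + T := by rw [eA, sum_insert h2notin]
    have s2 : ∑ i ∈ Icc 2 n, x i ^ 2 = x 2 ^ 2 + Q := by rw [eA, sum_insert h2notin]
    rw [s1, s2] at hp
    linarith
  have e4 : ∑ i ∈ Icc 3 n, (m * x i - T) ^ 2 = m ^ 2 * Q - m * T ^ 2 := by
    have expand : ∀ i ∈ Icc 3 n, (m * x i - T) ^ 2
        = m ^ 2 * x i ^ 2 - 2 * m * T * x i + T ^ 2 := fun i _ => by ring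
    rw [sum_congr rfl expand, sum_add_distrib, sum_sub_distrib, ← mul_sum, ← mul_sum,
      sum_const, nsmul_eq_mul, hcardR, ← hT, ← hQ]
    ring
  -- the three nonnegative terms
  set t1 : ℝ := 3 * (m + 1) / (2 * m ^ 2) * (∑ i ∈ Icc 3 n, (m * x i - T) ^ 2) with ht1def
  set t2 : ℝ := m * (3 * m + 5) / (8 * (3 * m + 11)) *
      ((9 * x 1 - 2 * x 2) - (9 * m + 11) / (m * (3 * m + 5)) * (3 * m * x 1 - 2 * T)) ^ 2
    with ht2def
  set t3 : ℝ := (m + 1) / (2 * m * (3 * m + 5)) * (3 * m * x 1 - 2 * T) ^ 2 with ht3def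
  have hc1 : (0 : ℝ) < 3 * (m + 1) / (2 * m ^ 2) :=
    div_pos (by linarith) (by nlinarith)
  have hc2 : (0 : ℝ) < m * (3 * m + 5) / (8 * (3 * m + 11)) :=
    div_pos (mul_pos hm0 (by linarith)) (by linarith)
  have hc3 : (0 : ℝ) < (m + 1) / (2 * m * (3 * m + 5)) :=
    div_pos (by linarith) (mul_pos (by linarith) (by linarith))
  have hsumnn : (0 : ℝ) ≤ ∑ i ∈ Icc 3 n, (m * x i - T) ^ 2 :=
    sum_nonneg fun i _ => sq_nonneg _
  have hnn1 : (0 : ℝ) ≤ t1 := mul_nonneg hc1.le hsumnn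
  have hnn2 : (0 : ℝ) ≤ t2 := mul_nonneg hc2.le (sq_nonneg _)
  have hnn3 : (0 : ℝ) ≤ t3 := mul_nonneg hc3.le (sq_nonneg _)
  -- the master identity
  have hnm : (n : ℝ) = m + 2 := by rw [hm]; ring
  have master :
      (3 * (n : ℝ) - 1) * ((n : ℝ) - 2) / (2 * (3 * (n : ℝ) + 5)) * (∑ i ∈ Icc 1 n, x i) ^ 2
        - (-((n : ℝ) - 2) * x 1 ^ 2
          - ((n : ℝ) - 1) * Q
          + ((n : ℝ) - 2) * (∑ i ∈ Icc 2 n, x 1 * x i)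
          + ((n : ℝ) - 1) * (∑ i ∈ Icc 2 n, ∑ j ∈ Icc (i + 1) n, x i * x j))
        = t1 + t2 + t3 := by
    rw [e1, e2, e3, ht1def, e4, ht2def, ht3def, hnm]
    have d1 : m ≠ 0 := hm0.ne'
    have d2 : (3 * m + 11) ≠ 0 := by intro h; linarith
    have d3 : (3 * m + 5) ≠ 0 := by intro h; linarith
    have d4 : (2 * (3 * (m + 2) + 5)) ≠ 0 := by intro h; linarith
    field_simp
    ring
  constructor
  · linarith
  · constructor
    · intro heq
      have hsum0 : t1 + t2 + t3 = 0 := by linarith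
      have ht1z : t1 = 0 := by linarith
      have ht2z : t2 = 0 := by linarith
      have ht3z : t3 = 0 := by linarith
      -- from t3 = 0 : 3 m x1 = 2 T
      have hL2 : 3 * m * x 1 - 2 * T = 0 := by
        have : (3 * m * x 1 - 2 * T) ^ 2 = 0 := by
          rcases mul_eq_zero.mp ht3z with h | h
          · exact absurd h hc3.ne'
          · exact h
        exact pow_eq_zero_iff two_ne_zero |>.mp this
      have hL1 : 9 * x 1 - 2 * x 2 = 0 := by
        have hsq : ((9 * x 1 - 2 * x 2)
            - (9 * m + 11) / (m * (3 * m + 5)) * (3 * m * x 1 - 2 * T)) ^ 2 = 0 := by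
          rcases mul_eq_zero.mp ht2z with h | h
          · exact absurd h hc2.ne'
          · exact h
        have := pow_eq_zero_iff (n := 2) two_ne_zero |>.mp hsq
        rw [hL2] at this
        linarith [this]
      have hx2 : x 2 = 9 / 2 * x 1 := by linarith
      have hU : ∑ i ∈ Icc 3 n, (m * x i - T) ^ 2 = 0 := by
        rcases mul_eq_zero.mp ht1z with h | h
        · exact absurd h hc1.ne'
        · exact h
      have hall : ∀ i ∈ Icc 3 n, (m * x i - T) ^ 2 = 0 :=
        (sum_eq_zero_iff_of_nonneg fun i _ => sq_nonneg _).mp hU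
      refine ⟨fun i hi => ?_, hx2⟩
      have hz := pow_eq_zero_iff (n := 2) two_ne_zero |>.mp (hall i hi)
      have hxi : m * x i = T := by linarith
      have hTval : T = m * (3 / 2 * x 1) := by linear_combination (-1/2 : ℝ) * hL2
      have : m * x i = m * (3 / 2 * x 1) := by rw [hxi, hTval]
      exact mul_left_cancel₀ hm0.ne' this
    · rintro ⟨hx3, hx2⟩
      have hTval : T = m * (3 / 2 * x 1) := by
        rw [hT, sum_congr rfl hx3, sum_const, nsmul_eq_mul, hcardR]
      have ht1z : t1 = 0 := by
        rw [ht1def]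
        have : ∑ i ∈ Icc 3 n, (m * x i - T) ^ 2 = 0 := by
          apply sum_eq_zero
          intro i hi
          rw [hx3 i hi, hTval]
          ring
        rw [this, mul_zero]
      have ht3z : t3 = 0 := by
        rw [ht3def, hTval]
        ring
      have ht2z : t2 = 0 := by
        rw [ht2def, hTval, hx2]
        ring
      linarith
end

section
/- Let μ, α, β, a be real numbers and n ≥ 2 an integer, and let C be the n×n real symmetric matrix with C₁₁ = μ, C₁ᵢ = Cᵢ₁ = a for 2 ≤ i ≤ n, Cᵢᵢ = α for 2 ≤ i ≤ n, and Cᵢⱼ = β for 2 ≤ i ≠ j ≤ n. Then the characteristic polynomial of C factors as det(λIₙ − C) = (λ − α + β)^{n−2}·{λ² − [μ + α + (n−2)β]λ + μα + (n−2)μβ − (n−1)a²}. -/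
open Matrix

/-- The `n×n` symmetric matrix with first diagonal entry `μ`, remaining diagonal
entries `α`, entries `a` in the rest of the first row and column, and `β` elsewhere. -/
def matC (n : ℕ) (μ α a β : ℝ) : Matrix (Fin n) (Fin n) ℝ :=
  Matrix.of fun i j =>
    if i = j then (if (i : ℕ) = 0 then μ else α)
    else if (i : ℕ) = 0 ∨ (j : ℕ) = 0 then a else β

/-- Auxiliary equivalence splitting `Fin n` as `Fin 2 ⊕ Fin (n-2)`. -/
def splitEquiv (n : ℕ) (hn : 2 ≤ n) : Fin n ≃ (Fin 2 ⊕ Fin (n - 2)) where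
  toFun i := if h : (i : ℕ) < 2 then Sum.inl ⟨i, h⟩ else Sum.inr ⟨(i : ℕ) - 2, by omega⟩
  invFun := Sum.elim (fun k => ⟨(k : ℕ), by omega⟩) (fun k => ⟨2 + (k : ℕ), by omega⟩)
  left_inv i := by
    by_cases h : (i : ℕ) < 2
    · simp only [dif_pos h, Sum.elim_inl]
    · simp only [dif_neg h, Sum.elim_inr]
      ext
      simp only [Fin.val_mk]
      omega
  right_inv k := by
    rcases k with k | k
    · have h : ((⟨(k : ℕ), by omega⟩ : Fin n) : ℕ) < 2 := k.isLt
      simp only [Sum.elim_inl, dif_pos h, dif_pos k.isLt, Fin.eta]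
      exact dif_pos k.isLt
    · have h : ¬ ((⟨2 + (k : ℕ), by omega⟩ : Fin n) : ℕ) < 2 := by simp; omega
      simp only [Sum.elim_inr]
      refine (dif_neg (show ¬ (2 + (k : ℕ) < 2) by omega)).trans ?_
      congr 1
      ext
      simp only [Fin.val_mk]
      omega

set_option maxHeartbeats 1000000 in
/-- The characteristic polynomial factorization
`det(λIₙ − C) = (λ − α + β)^{n−2}·(λ² − [μ + α + (n−2)β]λ + μα + (n−2)μβ − (n−1)a²)`. -/
theorem charpoly_matC (n : ℕ) (hn : 2 ≤ n) (μ α β a : ℝ) (lam : ℝ) :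
    (lam • (1 : Matrix (Fin n) (Fin n) ℝ) - matC n μ α a β).det =
      (lam - α + β) ^ (n - 2) *
        (lam ^ 2 - (μ + α + ((n : ℝ) - 2) * β) * lam
          + (μ * α + ((n : ℝ) - 2) * μ * β - ((n : ℝ) - 1) * a ^ 2)) := by
  classical
  set t : ℝ := lam - α + β with ht
  set M : Matrix (Fin n) (Fin n) ℝ := lam • 1 - matC n μ α a β with hMdef
  set k1 : Fin n := ⟨1, by omega⟩ with hk1
  have hk1v : (k1 : ℕ) = 1 := rfl
  have hM : ∀ i j, M i j = if i = j then (if (i : ℕ) = 0 then lam - μ else lam - α)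
      else (if (i : ℕ) = 0 ∨ (j : ℕ) = 0 then -a else -β) := by
    intro i j
    simp only [hMdef, Matrix.sub_apply, Matrix.smul_apply, Matrix.one_apply, matC,
      Matrix.of_apply, smul_eq_mul]
    split_ifs <;> ring
  set E : Matrix (Fin n) (Fin n) ℝ := Matrix.of fun i j =>
    (if i = j then (1 : ℝ) else 0) + (if (j : ℕ) = 1 ∧ 2 ≤ (i : ℕ) then -1 else 0) with hE
  set F : Matrix (Fin n) (Fin n) ℝ := Matrix.of fun i j =>
    (if i = j then (1 : ℝ) else 0) + (if (j : ℕ) = 1 ∧ 2 ≤ (i : ℕ) then 1 else 0) with hF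
  have hEdiag : ∀ i : Fin n, E i i = 1 := by
    intro i
    simp only [hE, Matrix.of_apply, Fin.ext_iff]
    split_ifs <;> first | ring1 | (exfalso; first | exact ‹False› | omega)
  have hElow : ∀ i j : Fin n, (i : ℕ) < (j : ℕ) → E i j = 0 := by
    intro i j hij
    simp only [hE, Matrix.of_apply, Fin.ext_iff]
    split_ifs <;> first | ring1 | (exfalso; first | exact ‹False› | omega)
  have hFdiag : ∀ i : Fin n, F i i = 1 := by
    intro i
    simp only [hF, Matrix.of_apply, Fin.ext_iff]
    split_ifs <;> first | ring1 | (exfalso; first | exact ‹False› | omega)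
  have hFlow : ∀ i j : Fin n, (i : ℕ) < (j : ℕ) → F i j = 0 := by
    intro i j hij
    simp only [hF, Matrix.of_apply, Fin.ext_iff]
    split_ifs <;> first | ring1 | (exfalso; first | exact ‹False› | omega)
  have hdetE : E.det = 1 := by
    rw [Matrix.det_of_lowerTriangular E (fun i j hij => hElow i j hij)]
    exact Finset.prod_eq_one fun i _ => hEdiag i
  have hdetF : F.det = 1 := by
    rw [Matrix.det_of_lowerTriangular F (fun i j hij => hFlow i j hij)]
    exact Finset.prod_eq_one fun i _ => hFdiag i
  -- entries of E * M
  have hEM : ∀ i j, (E * M) i j = M i j + (if 2 ≤ (i : ℕ) then -(M k1 j) else 0) := by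
    intro i j
    rw [Matrix.mul_apply]
    have hterm : ∀ k, E i k * M k j
        = (if i = k then M k j else 0)
          + (if k = k1 then (if 2 ≤ (i : ℕ) then -(M k1 j) else 0) else 0) := by
      intro k
      simp only [hE, Matrix.of_apply, add_mul]
      congr 1
      · split_ifs with h
        · ring
        · ring
      · by_cases hk : k = k1
        · subst hk
          rw [if_pos (show k1 = k1 from rfl)]
          by_cases h2 : 2 ≤ (i : ℕ)
          · rw [if_pos (show (k1 : ℕ) = 1 ∧ 2 ≤ (i : ℕ) from ⟨hk1v, h2⟩), if_pos h2]
            ring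
          · rw [if_neg (show ¬((k1 : ℕ) = 1 ∧ 2 ≤ (i : ℕ)) from fun hc => h2 hc.2),
              if_neg h2]
            ring
        · rw [if_neg hk,
            if_neg (show ¬((k : ℕ) = 1 ∧ 2 ≤ (i : ℕ)) from
              fun hc => hk (Fin.ext (by rw [hc.1, hk1v])))]
          ring
    rw [Finset.sum_congr rfl fun k _ => hterm k, Finset.sum_add_distrib,
      Finset.sum_ite_eq Finset.univ i (fun k => M k j),
      Finset.sum_ite_eq' Finset.univ k1 (fun _ => if 2 ≤ (i : ℕ) then -(M k1 j) else 0)]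
    simp
  -- closed formula for entries of E * M
  have hEMval : ∀ i j, (E * M) i j =
      if (i : ℕ) = 0 then (if i = j then lam - μ else -a)
      else if (i : ℕ) = 1 then
        (if i = j then lam - α else if (j : ℕ) = 0 then -a else -β)
      else (if i = j then t else if (j : ℕ) = 1 then -t else 0) := by
    intro i j
    rw [hEM i j, hM i j, hM k1 j]
    simp only [Fin.ext_iff, hk1v, Nat.one_ne_zero, false_or]
    split_ifs <;> first | ring1 | (rw [ht]; ring1) | (exfalso; first | exact ‹False› | omega)
  -- the filter of indices ≥ 2
  set S : Finset (Fin n) := Finset.univ.filter (fun k : Fin n => 2 ≤ (k : ℕ)) with hS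
  have hcard : S.card = n - 2 := by
    rw [hS, Finset.card_filter, Fin.sum_univ_eq_sum_range (fun k => if 2 ≤ k then 1 else 0) n,
      ← Finset.card_filter]
    have : (Finset.range n).filter (fun k => 2 ≤ k) = Finset.Ico 2 n := by
      ext x
      simp only [Finset.mem_filter, Finset.mem_range, Finset.mem_Ico]
      omega
    rw [this, Nat.card_Ico]
  have hcardR : ((S.card : ℕ) : ℝ) = (n : ℝ) - 2 := by
    rw [hcard, Nat.cast_sub hn]
    norm_num
  -- row sums over S of E * M
  have hSsum : ∀ i : Fin n, (∑ k ∈ S, (E * M) i k)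
      = if (i : ℕ) = 0 then ((n : ℝ) - 2) * (-a)
        else if (i : ℕ) = 1 then ((n : ℝ) - 2) * (-β) else t := by
    intro i
    by_cases hi0 : (i : ℕ) = 0
    · rw [if_pos hi0]
      have hconst : ∀ k ∈ S, (E * M) i k = -a := by
        intro k hk
        have hk2 : 2 ≤ (k : ℕ) := (Finset.mem_filter.mp hk).2
        rw [hEMval]
        simp only [Fin.ext_iff]
        split_ifs <;> first | ring1 | (exfalso; first | exact ‹False› | omega)
      rw [Finset.sum_congr rfl hconst, Finset.sum_const, nsmul_eq_mul, hcardR]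
    · by_cases hi1 : (i : ℕ) = 1
      · rw [if_neg hi0, if_pos hi1]
        have hconst : ∀ k ∈ S, (E * M) i k = -β := by
          intro k hk
          have hk2 : 2 ≤ (k : ℕ) := (Finset.mem_filter.mp hk).2
          rw [hEMval]
          simp only [Fin.ext_iff]
          split_ifs <;> first | ring1 | (exfalso; first | exact ‹False› | omega)
        rw [Finset.sum_congr rfl hconst, Finset.sum_const, nsmul_eq_mul, hcardR]
      · rw [if_neg hi0, if_neg hi1]
        have h2i : 2 ≤ (i : ℕ) := by omega
        have hconst : ∀ k ∈ S, (E * M) i k = if k = i then t else 0 := by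
          intro k hk
          have hk2 : 2 ≤ (k : ℕ) := (Finset.mem_filter.mp hk).2
          rw [hEMval]
          simp only [Fin.ext_iff]
          split_ifs <;> first | rfl | ring1 | (exfalso; first | exact ‹False› | omega)
        rw [Finset.sum_congr rfl hconst, Finset.sum_ite_eq' S i (fun _ => t),
          if_pos (Finset.mem_filter.mpr ⟨Finset.mem_univ i, h2i⟩)]
  -- entries of (E * M) * F
  have hNF : ∀ i j, (E * M * F) i j
      = (E * M) i j + (if (j : ℕ) = 1 then ∑ k ∈ S, (E * M) i k else 0) := by
    intro i j
    rw [Matrix.mul_apply]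
    have hterm : ∀ k, (E * M) i k * F k j
        = (if k = j then (E * M) i k else 0)
          + (if (j : ℕ) = 1 then (if 2 ≤ (k : ℕ) then (E * M) i k else 0) else 0) := by
      intro k
      simp only [hF, Matrix.of_apply, mul_add]
      congr 1
      · split_ifs with h
        · ring
        · ring
      · by_cases hj : (j : ℕ) = 1 <;> by_cases hk2 : 2 ≤ (k : ℕ) <;>
          simp [hj, hk2]
    rw [Finset.sum_congr rfl fun k _ => hterm k, Finset.sum_add_distrib,
      Finset.sum_ite_eq' Finset.univ j (fun k => (E * M) i k)]
    by_cases hj : (j : ℕ) = 1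
    · simp only [Finset.mem_univ, if_true, if_pos hj, hS, Finset.sum_filter]
    · simp only [Finset.mem_univ, if_true, if_neg hj, Finset.sum_const_zero, add_zero]
  -- the block matrices
  set A : Matrix (Fin 2) (Fin 2) ℝ := Matrix.of fun i j =>
    if (i : ℕ) = 0 then (if (j : ℕ) = 0 then lam - μ else -(((n : ℝ) - 1) * a))
    else (if (j : ℕ) = 0 then -a else lam - α - ((n : ℝ) - 2) * β) with hA
  set B : Matrix (Fin 2) (Fin (n - 2)) ℝ := Matrix.of fun i _ =>
    if (i : ℕ) = 0 then -a else -β with hB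
  set D : Matrix (Fin (n - 2)) (Fin (n - 2)) ℝ := t • 1 with hD
  have hfinal : E * M * F = (Matrix.fromBlocks A B 0 D).submatrix
      (splitEquiv n hn) (splitEquiv n hn) := by
    ext i j
    rw [Matrix.submatrix_apply, hNF i j, hSsum i, hEMval i j]
    by_cases hi : (i : ℕ) < 2 <;> by_cases hj : (j : ℕ) < 2
    · have hei : splitEquiv n hn i = Sum.inl ⟨(i : ℕ), hi⟩ := by
        simp only [splitEquiv, Equiv.coe_fn_mk]; exact dif_pos hi
      have hej : splitEquiv n hn j = Sum.inl ⟨(j : ℕ), hj⟩ := by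
        simp only [splitEquiv, Equiv.coe_fn_mk]; exact dif_pos hj
      rw [hei, hej, Matrix.fromBlocks_apply₁₁, hA]
      simp only [Matrix.of_apply, Fin.ext_iff, Fin.val_mk]
      split_ifs <;> first | ring1 | (rw [ht]; ring1) | (exfalso; first | exact ‹False› | omega)
    · have hei : splitEquiv n hn i = Sum.inl ⟨(i : ℕ), hi⟩ := by
        simp only [splitEquiv, Equiv.coe_fn_mk]; exact dif_pos hi
      have hej : splitEquiv n hn j = Sum.inr ⟨(j : ℕ) - 2, by omega⟩ := by
        simp only [splitEquiv, Equiv.coe_fn_mk]; exact dif_neg hj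
      rw [hei, hej, Matrix.fromBlocks_apply₁₂, hB]
      simp only [Matrix.of_apply, Fin.ext_iff, Fin.val_mk]
      split_ifs <;> first | ring1 | (rw [ht]; ring1) | (exfalso; first | exact ‹False› | omega)
    · have hei : splitEquiv n hn i = Sum.inr ⟨(i : ℕ) - 2, by omega⟩ := by
        simp only [splitEquiv, Equiv.coe_fn_mk]; exact dif_neg hi
      have hej : splitEquiv n hn j = Sum.inl ⟨(j : ℕ), hj⟩ := by
        simp only [splitEquiv, Equiv.coe_fn_mk]; exact dif_pos hj
      rw [hei, hej, Matrix.fromBlocks_apply₂₁]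
      simp only [Matrix.zero_apply, Fin.ext_iff, Fin.val_mk]
      split_ifs <;> first | ring1 | (rw [ht]; ring1) | (exfalso; first | exact ‹False› | omega)
    · have hei : splitEquiv n hn i = Sum.inr ⟨(i : ℕ) - 2, by omega⟩ := by
        simp only [splitEquiv, Equiv.coe_fn_mk]; exact dif_neg hi
      have hej : splitEquiv n hn j = Sum.inr ⟨(j : ℕ) - 2, by omega⟩ := by
        simp only [splitEquiv, Equiv.coe_fn_mk]; exact dif_neg hj
      rw [hei, hej, Matrix.fromBlocks_apply₂₂, hD]
      simp only [Matrix.smul_apply, Matrix.one_apply, smul_eq_mul, Fin.ext_iff, Fin.val_mk]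
      split_ifs <;> first | ring1 | (rw [ht]; ring1) | (exfalso; first | exact ‹False› | omega)
  have hdet : M.det = A.det * D.det := by
    calc M.det = E.det * M.det * F.det := by rw [hdetE, hdetF]; ring
    _ = (E * M * F).det := by rw [Matrix.det_mul, Matrix.det_mul]
    _ = ((Matrix.fromBlocks A B 0 D).submatrix (splitEquiv n hn) (splitEquiv n hn)).det := by
        rw [hfinal]
    _ = (Matrix.fromBlocks A B 0 D).det := Matrix.det_submatrix_equiv_self (splitEquiv n hn) _
    _ = A.det * D.det := Matrix.det_fromBlocks_zero₂₁ A B D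
  have hdetA : A.det = lam ^ 2 - (μ + α + ((n : ℝ) - 2) * β) * lam
      + (μ * α + ((n : ℝ) - 2) * μ * β - ((n : ℝ) - 1) * a ^ 2) := by
    rw [Matrix.det_fin_two, hA]
    simp only [Matrix.of_apply, Fin.val_zero, Fin.val_one]
    norm_num
    ring
  have hdetD : D.det = t ^ (n - 2) := by
    rw [hD, Matrix.det_smul, Matrix.det_one, Fintype.card_fin, mul_one]
  rw [hdet, hdetA, hdetD, ht]
  ring
end
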